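/- For s, r ∈ ℕ with s ≥ r define N₀^{(s,r)} := [ binom(s,r) · Γ(1/2+s)·Γ(1+r) / ( Γ((1+r+s)/2) · Γ(1+(r+s)/2) ) ]^{1/2}. Then for each fixed r ∈ ℕ, lim_{s→∞} N₀^{(s,r)} / N₀^{(s,0)} = 2^{r/2}. (The normalization limit used in Corollary 4.5 to identify the Pauli–Lubanski limit of the fields A^{(s,r)} with the infinite-spin fields Φ^{κ(r)}.) -/

import Mathlib

noncomputable section

open Filter

/-- The normalization constants `N₀^{(s,r)}`. -/
def N0 (s r : ℕ) : ℝ :=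
  Real.sqrt ((Nat.choose s r : ℝ) * Real.Gamma (1 / 2 + (s : ℝ)) * Real.Gamma (1 + (r : ℝ)) /
    (Real.Gamma ((1 + (r : ℝ) + (s : ℝ)) / 2) * Real.Gamma (1 + ((r : ℝ) + (s : ℝ)) / 2)))

/-- Legendre duplication specialized to natural arguments. -/
lemma gamma_prod (m : ℕ) :
    Real.Gamma ((1 + (m : ℝ)) / 2) * Real.Gamma (1 + (m : ℝ) / 2) =
      Real.sqrt Real.pi * (m.factorial : ℝ) / 2 ^ m := by
  have h := Real.Gamma_mul_Gamma_add_half ((1 + (m : ℝ)) / 2)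
  rw [show (1 + (m : ℝ)) / 2 + 1 / 2 = 1 + (m : ℝ) / 2 by ring,
    show 2 * ((1 + (m : ℝ)) / 2) = (m : ℝ) + 1 by ring,
    show 1 - ((m : ℝ) + 1) = -(m : ℝ) by ring,
    Real.Gamma_nat_eq_factorial, Real.rpow_neg (by norm_num), Real.rpow_natCast] at h
  rw [h]
  field_simp

lemma key (r s : ℕ) (h : r ≤ s) :
    N0 s r / N0 s 0 =
      Real.sqrt (2 ^ r * ((s.factorial : ℝ) ^ 2 /
        ((s - r).factorial * (s + r).factorial))) := by
  have hΓ : 0 < Real.Gamma (1 / 2 + (s : ℝ)) := Real.Gamma_pos_of_pos (by positivity)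
  have hπ : 0 < Real.sqrt Real.pi := Real.sqrt_pos.mpr Real.pi_pos
  have hr : Real.Gamma (1 + (r : ℝ)) = (r.factorial : ℝ) := by
    rw [show (1 : ℝ) + (r : ℝ) = (r : ℝ) + 1 by ring, Real.Gamma_nat_eq_factorial]
  have h1 : Real.Gamma ((1 + (r : ℝ) + (s : ℝ)) / 2) * Real.Gamma (1 + ((r : ℝ) + (s : ℝ)) / 2)
      = Real.sqrt Real.pi * ((r + s).factorial : ℝ) / 2 ^ (r + s) := by
    have := gamma_prod (r + s)
    push_cast at this
    rw [show (1 + ((r : ℝ) + (s : ℝ))) / 2 = (1 + (r : ℝ) + (s : ℝ)) / 2 by ring] at this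
    exact this
  have h0 : Real.Gamma ((1 + ((0:ℕ) : ℝ) + (s : ℝ)) / 2) * Real.Gamma (1 + (((0:ℕ) : ℝ) + (s : ℝ)) / 2)
      = Real.sqrt Real.pi * (s.factorial : ℝ) / 2 ^ s := by
    have := gamma_prod s
    push_cast at this ⊢
    rw [show (1 + (0:ℝ) + (s : ℝ)) / 2 = (1 + (s : ℝ)) / 2 by ring,
      show 1 + ((0:ℝ) + (s : ℝ)) / 2 = 1 + (s : ℝ) / 2 by ring]
    exact this
  have hc : ((s.choose r : ℝ)) * (r.factorial : ℝ) * ((s - r).factorial : ℝ) = (s.factorial : ℝ) := by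
    exact_mod_cast congrArg (Nat.cast : ℕ → ℝ) (Nat.choose_mul_factorial_mul_factorial h)
  have hfr : (0:ℝ) < (r.factorial : ℝ) := by exact_mod_cast r.factorial_pos
  have hfsr : (0:ℝ) < ((s - r).factorial : ℝ) := by exact_mod_cast (s - r).factorial_pos
  have hc' : ((s.choose r : ℝ)) = (s.factorial : ℝ) / ((r.factorial : ℝ) * ((s - r).factorial : ℝ)) := by
    field_simp
    linarith [hc]
  unfold N0
  rw [hr, h1, h0]
  simp only [Nat.choose_zero_right, Nat.cast_one, Real.Gamma_one, one_mul, mul_one]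
  rw [← Real.sqrt_div (by positivity)]
  congr 1
  set g := Real.Gamma (1 / 2 + (s : ℝ)) with hg
  have hfs : (0:ℝ) < (s.factorial : ℝ) := by exact_mod_cast s.factorial_pos
  have hfrs : (0:ℝ) < ((r + s).factorial : ℝ) := by exact_mod_cast (r + s).factorial_pos
  rw [show s + r = r + s from Nat.add_comm s r, hc']
  simp only [Nat.cast_zero, add_zero, Real.Gamma_one]
  field_simp
  ring

lemma D_tendsto (r : ℕ) :
    Tendsto (fun s : ℕ => ((s.factorial : ℝ)) ^ 2 / ((s - r).factorial * (s + r).factorial))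
      atTop (nhds 1) := by
  induction r with
  | zero =>
    apply Tendsto.congr (f₁ := fun _ => (1:ℝ))
    · intro s
      have : (0:ℝ) < (s.factorial : ℝ) := by exact_mod_cast s.factorial_pos
      field_simp
      rw [Nat.sub_zero]
      ring
    · exact tendsto_const_nhds
  | succ r ih =>
    have hfac : Tendsto (fun s : ℕ => ((s : ℝ) - r) / ((s : ℝ) + r + 1)) atTop (nhds 1) := by
      have h0 : Tendsto (fun s : ℕ => (2 * (r : ℝ) + 1) / ((s : ℝ) + (r + 1))) atTop (nhds 0) :=
        Filter.Tendsto.div_atTop tendsto_const_nhds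
          (Filter.tendsto_atTop_add_const_right _ _ tendsto_natCast_atTop_atTop)
      have := Filter.Tendsto.sub (tendsto_const_nhds (x := (1:ℝ))) h0
      simp only [sub_zero] at this
      apply this.congr
      intro s
      have hpos : (0:ℝ) < (s : ℝ) + (r + 1) := by positivity
      field_simp
      ring
    have hm := ih.mul hfac
    rw [mul_one] at hm
    apply hm.congr'
    filter_upwards [eventually_ge_atTop (r + 1)] with s hs
    have h1 : (s - r).factorial = (s - (r + 1)).factorial * (s - r) := by
      rw [show s - r = (s - (r + 1)) + 1 by omega, Nat.factorial_succ]
      ring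
    have h2 : (s + (r + 1)).factorial = (s + r).factorial * (s + r + 1) := by
      rw [show s + (r + 1) = (s + r) + 1 by omega, Nat.factorial_succ]
      ring
    have hcast : ((s : ℝ) - r) = (((s - r : ℕ)) : ℝ) := by
      have : r ≤ s := by omega
      push_cast [this]
      ring
    have hfsr : (0:ℝ) < ((s - (r+1)).factorial : ℝ) := by exact_mod_cast (s - (r+1)).factorial_pos
    have hfr : (0:ℝ) < ((s + r).factorial : ℝ) := by exact_mod_cast (s + r).factorial_pos
    have hsr : (0:ℝ) < ((s : ℝ) - r) := by
      have : (r : ℝ) < (s : ℝ) := by exact_mod_cast (by omega : r < s)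
      linarith
    rw [h1, h2]
    push_cast
    rw [← hcast]
    field_simp

/-- The normalization limit of Corollary 4.5: for fixed `r`,
`N₀^{(s,r)}/N₀^{(s,0)} → 2^{r/2}` as `s → ∞`. -/
theorem normalization_limit (r : ℕ) :
    Tendsto (fun s : ℕ => N0 s r / N0 s 0) atTop (nhds ((2 : ℝ) ^ ((r : ℝ) / 2))) := by
  have hD := D_tendsto r
  have h2 : Tendsto (fun s : ℕ => (2:ℝ) ^ r * ((s.factorial : ℝ) ^ 2 /
      ((s - r).factorial * (s + r).factorial))) atTop (nhds ((2:ℝ) ^ r)) := by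
    simpa using (tendsto_const_nhds (x := (2:ℝ) ^ r)).mul hD
  have hsqrt := (Real.continuous_sqrt.tendsto ((2:ℝ) ^ r)).comp h2
  have heq : Real.sqrt ((2:ℝ) ^ r) = (2:ℝ) ^ ((r : ℝ) / 2) := by
    rw [Real.sqrt_eq_rpow, ← Real.rpow_natCast 2 r, ← Real.rpow_mul (by norm_num), mul_one_div]
  rw [← heq]
  apply hsqrt.congr'
  filter_upwards [eventually_ge_atTop r] with s hs
  exact (key r s hs).symm
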